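/- Let C be an abelian category and consider a commutative square of monomorphisms i : x ⟶ y, j : x ⟶ z, p : z ⟶ w, q : y ⟶ w with q ∘ i = p ∘ j. Then the following are equivalent: (1) the canonical morphism z ⊔_x y ⟶ w induced from the pushout of i along j is a monomorphism; (2) the induced morphism coker(j) ⟶ coker(q) (i.e. z/x ⟶ w/y, induced on cokernels by p and q) is a monomorphism; (3) the induced morphism coker(i) ⟶ coker(p) (i.e. y/x ⟶ w/z) is a monomorphism. -/

import Mathlib

open CategoryTheory CategoryTheory.Limits

section Aux

variable {C : Type*} [Category C] [Abelian C]

omit [Abelian C] in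
lemma mono_iff_of_iso_comp {A B D : C} (e : A ≅ B) (m : B ⟶ D) :
    Mono (e.hom ≫ m) ↔ Mono m :=
  ⟨fun h => by rw [← Iso.inv_hom_id_assoc e m]; exact mono_comp _ _, fun h => mono_comp _ _⟩

/-- If `f` is mono and `f ≫ g = fg` is mono, then `g` is mono iff the induced map
`coker f ⟶ coker fg` is mono. -/
lemma aux_mono_iff {A B D : C} (f : A ⟶ B) [Mono f] (g : B ⟶ D) (fg : A ⟶ D)
    (h : f ≫ g = fg) [Mono fg] :
    Mono g ↔ Mono (cokernel.map f fg (𝟙 A) g (by simp [h])) := by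
  constructor
  · intro hg
    apply Preadditive.mono_of_cancel_zero
    intro T k hk
    have hpb : pullback.fst (cokernel.π f) k ≫ cokernel.π f = pullback.snd _ _ ≫ k :=
      pullback.condition
    have h1 : (pullback.fst (cokernel.π f) k ≫ g) ≫ cokernel.π fg = 0 := by
      have : cokernel.π f ≫ cokernel.map f fg (𝟙 A) g (by simp [h]) = g ≫ cokernel.π fg := by
        simp [cokernel.map]
      rw [Category.assoc, ← this, ← Category.assoc, hpb, Category.assoc, hk, comp_zero]
    set m := Abelian.monoLift fg (pullback.fst (cokernel.π f) k ≫ g) h1 with hm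
    have h2 : m ≫ fg = pullback.fst (cokernel.π f) k ≫ g := Abelian.monoLift_comp _ _ _
    have h3 : m ≫ f = pullback.fst (cokernel.π f) k := by
      rw [← cancel_mono g, Category.assoc, h, h2]
    have h4 : pullback.snd (cokernel.π f) k ≫ k = 0 := by
      rw [← hpb, ← h3, Category.assoc, cokernel.condition, comp_zero]
    exact zero_of_epi_comp (pullback.snd (cokernel.π f) k) h4
  · intro hc
    apply Preadditive.mono_of_cancel_zero
    intro T k hk
    have h1 : (k ≫ cokernel.π f) ≫ cokernel.map f fg (𝟙 A) g (by simp [h]) = 0 := by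
      have : cokernel.π f ≫ cokernel.map f fg (𝟙 A) g (by simp [h]) = g ≫ cokernel.π fg := by
        simp [cokernel.map]
      rw [Category.assoc, this, ← Category.assoc, hk, zero_comp]
    have h2 : k ≫ cokernel.π f = 0 := zero_of_comp_mono _ h1
    set l := Abelian.monoLift f k h2 with hl
    have h3 : l ≫ f = k := Abelian.monoLift_comp _ _ _
    have h4 : l ≫ fg = 0 := by rw [← h, ← Category.assoc, h3, hk]
    have h5 : l = 0 := zero_of_comp_mono fg h4
    rw [← h3, h5, zero_comp]

/-- The cokernel of `j : x ⟶ z` is isomorphic to the cokernel of `pushout.inl i j`. -/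
noncomputable def cokerIso {x y z : C} (i : x ⟶ y) (j : x ⟶ z) :
    cokernel j ≅ cokernel (pushout.inl i j) where
  hom := cokernel.desc j (pushout.inr i j ≫ cokernel.π _)
    (by rw [← Category.assoc, ← pushout.condition, Category.assoc, cokernel.condition,
      comp_zero])
  inv := cokernel.desc _ (pushout.desc 0 (cokernel.π j)
      (by exact comp_zero.trans (cokernel.condition j).symm)) (by simp [pushout.inl_desc, pushout.inr_desc, pushout.inl_desc_assoc, pushout.inr_desc_assoc])
  hom_inv_id := by
    apply coequalizer.hom_ext
    simp [pushout.inl_desc, pushout.inr_desc, pushout.inl_desc_assoc, pushout.inr_desc_assoc]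
  inv_hom_id := by
    apply coequalizer.hom_ext
    apply pushout.hom_ext <;> simp [← pushout.condition_assoc, pushout.condition, pushout.inl_desc, pushout.inr_desc, pushout.inl_desc_assoc, pushout.inr_desc_assoc]

lemma key {x y z w : C} (i : x ⟶ y) (j : x ⟶ z) (q : y ⟶ w) (p : z ⟶ w)
    [Mono i] [Mono j] [Mono q] [Mono p] (comm : i ≫ q = j ≫ p) :
    Mono (pushout.desc q p comm) ↔ Mono (cokernel.map j q i p comm.symm) := by
  have hfact : cokernel.map j q i p comm.symm =
      (cokerIso i j).hom ≫
        cokernel.map (pushout.inl i j) q (𝟙 y) (pushout.desc q p comm) (by simp [pushout.inl_desc, pushout.inr_desc, pushout.inl_desc_assoc, pushout.inr_desc_assoc]) := by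
    apply coequalizer.hom_ext
    simp [cokerIso, cokernel.map, pushout.inl_desc, pushout.inr_desc, pushout.inl_desc_assoc, pushout.inr_desc_assoc]
  rw [hfact, mono_iff_of_iso_comp]
  exact aux_mono_iff (pushout.inl i j) (pushout.desc q p comm) q (by simp [pushout.inl_desc, pushout.inr_desc, pushout.inl_desc_assoc, pushout.inr_desc_assoc])

end Aux

/-- In an abelian category, for a commutative square of monomorphisms
`i : x ⟶ y`, `j : x ⟶ z`, `q : y ⟶ w`, `p : z ⟶ w` with `i ≫ q = j ≫ p`,
the following are equivalent:
(1) the canonical morphism `z ⊔ₓ y ⟶ w` from the pushout is a monomorphism;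
(2) the induced morphism `z/x ⟶ w/y` on cokernels is a monomorphism;
(3) the induced morphism `y/x ⟶ w/z` on cokernels is a monomorphism. -/
theorem stmt1 {C : Type*} [Category C] [Abelian C]
    {x y z w : C} (i : x ⟶ y) (j : x ⟶ z) (q : y ⟶ w) (p : z ⟶ w)
    [Mono i] [Mono j] [Mono q] [Mono p]
    (comm : i ≫ q = j ≫ p) :
    List.TFAE [Mono (pushout.desc q p comm),
      Mono (cokernel.map j q i p comm.symm),
      Mono (cokernel.map i p j q comm)] := by
  have h12 : Mono (pushout.desc q p comm) ↔ Mono (cokernel.map j q i p comm.symm) :=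
    key i j q p comm
  have hsym : (pushoutSymmetry i j).hom ≫ pushout.desc p q comm.symm =
      pushout.desc q p comm := by
    apply pushout.hom_ext <;> simp [pushout.inl_desc, pushout.inr_desc, pushout.inl_desc_assoc, pushout.inr_desc_assoc]
  have h13 : Mono (pushout.desc q p comm) ↔ Mono (cokernel.map i p j q comm) := by
    rw [← hsym, mono_iff_of_iso_comp]
    exact key j i p q comm.symm
  tfae_have 1 ↔ 2 := h12
  tfae_have 1 ↔ 3 := h13
  tfae_finish
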